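/- (First Korn inequality.) Let n ≥ 1 be an integer and let w : ℝⁿ → ℝⁿ be a continuously differentiable map with compact support. Then ∫_{ℝⁿ} |∇w(x)|² dx ≤ 2 ∫_{ℝⁿ} |e(w)(x)|² dx, where e(w)(x) = (∇w(x) + (∇w(x))ᵀ)/2 is the strain tensor and |A|² = Σ_{i,j} A_{ij}² denotes the squared Frobenius norm of a matrix A. -/

import Mathlib

open MeasureTheory

variable {E : Type*} [NormedAddCommGroup E] [NormedSpace ℝ E] [FiniteDimensional ℝ E]
  [MeasurableSpace E] [BorelSpace E] {μ : Measure E} [μ.IsAddHaarMeasure]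

lemma korn_prod_integ {a b : E → ℝ} (ha : Continuous a) (hb : Continuous b)
    (h : HasCompactSupport a) : Integrable (fun x => a x * b x) μ :=
  (ha.mul hb).integrable_of_hasCompactSupport h.mul_right

lemma korn_swap_smooth {u v : E → ℝ} (hu : ContDiff ℝ 1 u) (hcu : HasCompactSupport u)
    (hv : ContDiff ℝ 2 v) (hcv : HasCompactSupport v) (p q : E) :
    ∫ x, fderiv ℝ u x p * fderiv ℝ v x q ∂μ = ∫ x, fderiv ℝ u x q * fderiv ℝ v x p ∂μ := by
  have hvd : Differentiable ℝ v := hv.differentiable two_ne_zero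
  have hv' : ContDiff ℝ 1 (fderiv ℝ v) := hv.fderiv_right (m := 1) le_rfl
  have hv'd : Differentiable ℝ (fderiv ℝ v) := hv'.differentiable one_ne_zero
  have hud : Differentiable ℝ u := hu.differentiable one_ne_zero
  have hcu' : Continuous (fderiv ℝ u) := hu.continuous_fderiv one_ne_zero
  have hcv'c : Continuous (fderiv ℝ v) := hv.continuous_fderiv (by norm_num)
  have hcv'' : Continuous (fderiv ℝ (fderiv ℝ v)) := hv'.continuous_fderiv one_ne_zero
  have hg : ∀ (r : E), Differentiable ℝ (fun x => fderiv ℝ v x r) := by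
    intro r
    exact fun x => ((ContinuousLinearMap.apply ℝ ℝ r).differentiable _).comp x (hv'd x)
  have hgd : ∀ (r s : E) (x : E),
      fderiv ℝ (fun y => fderiv ℝ v y r) x s = fderiv ℝ (fderiv ℝ v) x s r := by
    intro r s x
    have : HasFDerivAt (fun y => fderiv ℝ v y r)
        ((ContinuousLinearMap.apply ℝ ℝ r).comp (fderiv ℝ (fderiv ℝ v) x)) x :=
      (ContinuousLinearMap.apply ℝ ℝ r).hasFDerivAt.comp x (hv'd x).hasFDerivAt
    rw [this.fderiv]; rfl
  -- continuity & compact support of the building blocks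
  have cu' : ∀ r : E, Continuous (fun x => fderiv ℝ u x r) := fun r =>
    hcu'.clm_apply continuous_const
  have cv' : ∀ r : E, Continuous (fun x => fderiv ℝ v x r) := fun r =>
    hcv'c.clm_apply continuous_const
  have cv'' : ∀ r s : E, Continuous (fun x => fderiv ℝ (fderiv ℝ v) x r s) := fun r s =>
    (hcv''.clm_apply continuous_const).clm_apply continuous_const
  have su' : ∀ r : E, HasCompactSupport (fun x => fderiv ℝ u x r) := fun r =>
    (hcu.fderiv ℝ).comp_left (g := fun L : E →L[ℝ] ℝ => L r) rfl
  have sv' : ∀ r : E, HasCompactSupport (fun x => fderiv ℝ v x r) := fun r =>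
    (hcv.fderiv ℝ).comp_left (g := fun L : E →L[ℝ] ℝ => L r) rfl
  have sv'' : ∀ r s : E, HasCompactSupport (fun x => fderiv ℝ (fderiv ℝ v) x r s) := fun r s =>
    ((hcv.fderiv ℝ).fderiv ℝ).comp_left (g := fun L : E →L[ℝ] (E →L[ℝ] ℝ) => L r s) rfl
  have ibp : ∀ r s : E, ∫ x, fderiv ℝ u x s * fderiv ℝ v x r ∂μ
      = - ∫ x, u x * fderiv ℝ (fderiv ℝ v) x s r ∂μ := by
    intro r s
    have h1 : Integrable (fun x => fderiv ℝ u x s * fderiv ℝ v x r) μ :=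
      korn_prod_integ (cu' s) (cv' r) (su' s)
    have h2 : Integrable (fun x => u x * fderiv ℝ (fun y => fderiv ℝ v y r) x s) μ := by
      simp only [hgd]
      exact korn_prod_integ hu.continuous (cv'' s r) hcu
    have h3 : Integrable (fun x => u x * fderiv ℝ v x r) μ :=
      korn_prod_integ hu.continuous (cv' r) hcu
    have := integral_mul_fderiv_eq_neg_fderiv_mul_of_integrable
      (f := u) (g := fun y => fderiv ℝ v y r) (v := s) h1 h2 h3 (fun x _ => hud x) (fun x _ => hg r x)
    simp only [hgd] at this
    linarith
  rw [ibp q p, ibp p q]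
  congr 1
  apply integral_congr_ae
  filter_upwards with x
  congr 1
  exact second_derivative_symmetric (fun y => (hvd y).hasFDerivAt) ((hv'd x).hasFDerivAt) p q

open Filter Convolution Pointwise


lemma korn_swap {n : ℕ} {u v : (Fin n → ℝ) → ℝ}
    (hu : ContDiff ℝ 1 u) (hcu : HasCompactSupport u)
    (hv : ContDiff ℝ 1 v) (hcv : HasCompactSupport v) (p q : Fin n → ℝ) :
    ∫ x, fderiv ℝ u x p * fderiv ℝ v x q = ∫ x, fderiv ℝ u x q * fderiv ℝ v x p := by
  classical
  set L : ℝ →L[ℝ] ℝ →L[ℝ] ℝ := ContinuousLinearMap.lsmul ℝ ℝ with hLdef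
  have hvloc : LocallyIntegrable v (volume : Measure (Fin n → ℝ)) := hv.continuous.locallyIntegrable
  have hpos : ∀ k : ℕ, (0:ℝ) < 1/(k+1) := fun k => by positivity
  let φ : ℕ → ContDiffBump (0 : Fin n → ℝ) := fun k =>
    ⟨1/(k+1)/2, 1/(k+1), by positivity, half_lt_self (hpos k)⟩
  let f : ℕ → (Fin n → ℝ) → ℝ := fun k => (φ k).normed volume
  let vk : ℕ → (Fin n → ℝ) → ℝ := fun k => f k ⋆[L, volume] v
  have hfs : ∀ k, HasCompactSupport (f k) := fun k => (φ k).hasCompactSupport_normed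
  have hfl : ∀ k, LocallyIntegrable (f k) (volume : Measure (Fin n → ℝ)) := fun k =>
    ((φ k).contDiff_normed (n := 1)).continuous.locallyIntegrable
  have hvk2 : ∀ k, ContDiff ℝ 2 (vk k) := fun k =>
    (hfs k).contDiff_convolution_left L ((φ k).contDiff_normed (n := 2)) hvloc
  have hvks : ∀ k, HasCompactSupport (vk k) := fun k => (hfs k).convolution L hcv
  have hder : ∀ (k : ℕ) (r x : Fin n → ℝ),
      fderiv ℝ (vk k) x r = (f k ⋆[L, volume] (fun a => fderiv ℝ v a r)) x := by
    intro k r x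
    have h1 := hcv.hasFDerivAt_convolution_right L (hfl k) hv x
    rw [h1.fderiv]
    exact convolution_precompR_apply L (hfl k) (hcv.fderiv ℝ)
      (hv.continuous_fderiv one_ne_zero) x r
  have hrout : Tendsto (fun k => (φ k).rOut) atTop (nhds 0) :=
    tendsto_one_div_add_atTop_nhds_zero_nat
  have hlim : ∀ (r x : Fin n → ℝ),
      Tendsto (fun k => fderiv ℝ (vk k) x r) atTop (nhds (fderiv ℝ v x r)) := by
    intro r x
    simp only [hder]
    exact ContDiffBump.convolution_tendsto_right_of_continuous hrout
      ((hv.continuous_fderiv one_ne_zero).clm_apply continuous_const) x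
  -- uniform bound on the convolutions
  have hconv_bound : ∀ (k : ℕ) (g : (Fin n → ℝ) → ℝ) (C : ℝ), Continuous g → (∀ x, ‖g x‖ ≤ C) →
      ∀ x, ‖(f k ⋆[L, volume] g) x‖ ≤ 3 * C := by
    intro k g C hg hC x
    have h1 : dist ((f k ⋆[L, volume] g) x) (g x) ≤ 2 * C := by
      apply (φ k).dist_normed_convolution_le hg.aestronglyMeasurable
      intro z _
      calc dist (g z) (g x) ≤ ‖g z‖ + ‖g x‖ := dist_le_norm_add_norm _ _
        _ ≤ C + C := add_le_add (hC z) (hC x)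
        _ = 2 * C := by ring
    calc ‖(f k ⋆[L, volume] g) x‖ = dist ((f k ⋆[L, volume] g) x) 0 := (dist_zero_right _).symm
      _ ≤ dist ((f k ⋆[L, volume] g) x) (g x) + dist (g x) 0 := dist_triangle _ _ _
      _ ≤ 2 * C + C := add_le_add h1 (by rw [dist_zero_right]; exact hC x)
      _ = 3 * C := by ring
  -- common compact support
  set K : Set (Fin n → ℝ) := Metric.closedBall (0 : Fin n → ℝ) 1 + tsupport v with hKdef
  have hK : IsCompact K := (isCompact_closedBall _ _).add hcv
  have hKzero : ∀ (k : ℕ) (g : (Fin n → ℝ) → ℝ), Function.support g ⊆ tsupport v →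
      ∀ x, x ∉ K → (f k ⋆[L, volume] g) x = 0 := by
    intro k g hg x hx
    have hsub : Function.support (f k ⋆[L, volume] g) ⊆ K := by
      refine (support_convolution_subset L).trans ?_
      apply Set.add_subset_add ?_ hg
      refine (subset_tsupport _).trans ?_
      rw [(φ k).tsupport_normed_eq]
      apply Metric.closedBall_subset_closedBall
      rw [div_le_one (by positivity)]
      linarith [Nat.cast_nonneg (α := ℝ) k]
    exact Function.notMem_support.mp (fun hs => hx (hsub hs))
  -- dominated convergence
  have key : ∀ (r s : Fin n → ℝ),
      Tendsto (fun k => ∫ x, fderiv ℝ u x r * fderiv ℝ (vk k) x s)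
        atTop (nhds (∫ x, fderiv ℝ u x r * fderiv ℝ v x s)) := by
    intro r s
    obtain ⟨Cu, hCu⟩ := ((hcu.fderiv ℝ).comp_left
        (g := fun T : (Fin n → ℝ) →L[ℝ] ℝ => T r) rfl).exists_bound_of_continuous
      ((hu.continuous_fderiv one_ne_zero).clm_apply continuous_const)
    obtain ⟨Cv, hCv⟩ := ((hcv.fderiv ℝ).comp_left
        (g := fun T : (Fin n → ℝ) →L[ℝ] ℝ => T s) rfl).exists_bound_of_continuous
      ((hv.continuous_fderiv one_ne_zero).clm_apply continuous_const)
    have hCunn : 0 ≤ Cu := le_trans (norm_nonneg _) (hCu 0)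
    apply tendsto_integral_of_dominated_convergence (K.indicator fun _ => Cu * (3 * Cv))
    · intro k
      exact (((hu.continuous_fderiv one_ne_zero).clm_apply continuous_const).mul
        (((hvk2 k).continuous_fderiv (by norm_num)).clm_apply continuous_const)).aestronglyMeasurable
    · rw [integrable_indicator_iff hK.isClosed.measurableSet]
      exact integrableOn_const hK.measure_lt_top.ne
    · intro k
      filter_upwards with x
      by_cases hx : x ∈ K
      · rw [Set.indicator_of_mem hx, norm_mul]
        apply mul_le_mul (hCu x) ?_ (norm_nonneg _) hCunn
        rw [hder]
        exact hconv_bound k _ Cv ((hv.continuous_fderiv one_ne_zero).clm_apply continuous_const) hCv x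
      · rw [Set.indicator_of_notMem hx]
        have h0 : fderiv ℝ (vk k) x s = 0 := by
          rw [hder]
          apply hKzero k _ ?_ x hx
          intro a ha
          have : fderiv ℝ v a ≠ 0 := by
            intro h; apply ha; simp [h]
          exact support_fderiv_subset ℝ (Function.mem_support.mpr this)
        simp [h0]
    · filter_upwards with x
      exact ((hlim s x).const_mul _)
  have heq : ∀ k, ∫ x, fderiv ℝ u x p * fderiv ℝ (vk k) x q
      = ∫ x, fderiv ℝ u x q * fderiv ℝ (vk k) x p :=
    fun k => korn_swap_smooth hu hcu (hvk2 k) (hvks k) p q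
  exact tendsto_nhds_unique ((funext heq : _ = _) ▸ key p q) (key q p)

/-- **first Korn inequality.** For a `C¹` compactly supported map
`w : ℝⁿ → ℝⁿ`, `∫ |∇w|² ≤ 2 ∫ |e(w)|²`, where `e(w) = (∇w + (∇w)ᵀ)/2` and `|·|` is
the Frobenius norm. -/
theorem first_korn_inequality (n : ℕ) (hn : 1 ≤ n)
    (w : (Fin n → ℝ) → (Fin n → ℝ)) (hw : ContDiff ℝ 1 w)
    (hsupp : HasCompactSupport w) :
    (∫ x : Fin n → ℝ, ∑ i, ∑ j, (fderiv ℝ w x (Pi.single j 1) i) ^ 2)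
      ≤ 2 * ∫ x : Fin n → ℝ, ∑ i, ∑ j,
          ((fderiv ℝ w x (Pi.single j 1) i + fderiv ℝ w x (Pi.single i 1) j) / 2) ^ 2 := by
  classical
  -- components
  have hwc : ∀ i : Fin n, ContDiff ℝ 1 (fun y => w y i) := fun i =>
    (ContinuousLinearMap.proj (R := ℝ) (φ := fun _ : Fin n => ℝ) i).contDiff.comp hw
  have hws : ∀ i : Fin n, HasCompactSupport (fun y => w y i) := fun i =>
    hsupp.comp_left (g := fun y : Fin n → ℝ => y i) rfl
  have hfd : ∀ (i : Fin n) (x v : Fin n → ℝ),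
      fderiv ℝ (fun y => w y i) x v = fderiv ℝ w x v i := by
    intro i x v
    have h0 := ((ContinuousLinearMap.proj (R := ℝ) (φ := fun _ : Fin n => ℝ)
        i).hasFDerivAt (x := w x)).comp x (hw.differentiable one_ne_zero x).hasFDerivAt
    have h : HasFDerivAt (fun y => w y i)
        ((ContinuousLinearMap.proj (R := ℝ) (φ := fun _ : Fin n => ℝ) i).comp (fderiv ℝ w x)) x :=
      h0
    rw [h.fderiv]; rfl
  -- continuity and support of entries
  have cA : ∀ (r : Fin n → ℝ) (i : Fin n), Continuous (fun x => fderiv ℝ w x r i) := fun r i =>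
    (continuous_apply i).comp ((hw.continuous_fderiv one_ne_zero).clm_apply continuous_const)
  have sA : ∀ (r : Fin n → ℝ) (i : Fin n), HasCompactSupport (fun x => fderiv ℝ w x r i) :=
    fun r i => (hsupp.fderiv ℝ).comp_left
      (g := fun T : (Fin n → ℝ) →L[ℝ] (Fin n → ℝ) => T r i) rfl
  have iProd : ∀ (r : Fin n → ℝ) (i : Fin n) (r' : Fin n → ℝ) (i' : Fin n),
      Integrable (fun x => fderiv ℝ w x r i * fderiv ℝ w x r' i') := fun r i r' i' =>
    korn_prod_integ (cA r i) (cA r' i') (sA r i)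
  -- integrability of P and Q
  have iP : Integrable (fun x => ∑ i, ∑ j, (fderiv ℝ w x (Pi.single j 1) i) ^ 2) := by
    apply integrable_finset_sum; intro i _
    apply integrable_finset_sum; intro j _
    simpa [pow_two] using iProd (Pi.single j 1) i (Pi.single j 1) i
  have iQ : Integrable (fun x => ∑ i, ∑ j,
      fderiv ℝ w x (Pi.single j 1) i * fderiv ℝ w x (Pi.single i 1) j) := by
    apply integrable_finset_sum; intro i _
    apply integrable_finset_sum; intro j _
    exact iProd (Pi.single j 1) i (Pi.single i 1) j
  -- pointwise algebraic identity
  have hpt : ∀ x : Fin n → ℝ,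
      2 * (∑ i, ∑ j, ((fderiv ℝ w x (Pi.single j 1) i + fderiv ℝ w x (Pi.single i 1) j) / 2) ^ 2)
      = (∑ i, ∑ j, (fderiv ℝ w x (Pi.single j 1) i) ^ 2)
        + ∑ i, ∑ j, fderiv ℝ w x (Pi.single j 1) i * fderiv ℝ w x (Pi.single i 1) j := by
    intro x
    set A : Fin n → Fin n → ℝ := fun i j => fderiv ℝ w x (Pi.single j 1) i with hA
    have h1 : ∑ i, ∑ j, (A j i) ^ 2 = ∑ i, ∑ j, (A i j) ^ 2 := Finset.sum_comm
    calc 2 * ∑ i, ∑ j, ((A i j + A j i) / 2) ^ 2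
        = ∑ i, ∑ j, ((A i j) ^ 2 / 2 + (A j i) ^ 2 / 2 + A i j * A j i) := by
          rw [Finset.mul_sum]
          refine Finset.sum_congr rfl fun i _ => ?_
          rw [Finset.mul_sum]
          exact Finset.sum_congr rfl fun j _ => by ring
      _ = (∑ i, ∑ j, (A i j) ^ 2) / 2 + (∑ i, ∑ j, (A j i) ^ 2) / 2
            + ∑ i, ∑ j, A i j * A j i := by
          simp only [Finset.sum_add_distrib, Finset.sum_div]
      _ = (∑ i, ∑ j, (A i j) ^ 2) + ∑ i, ∑ j, A i j * A j i := by rw [h1]; ring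
  -- ∫ Q ≥ 0
  have swapped : ∀ i j : Fin n,
      ∫ x, fderiv ℝ w x (Pi.single j 1) i * fderiv ℝ w x (Pi.single i 1) j
      = ∫ x, fderiv ℝ w x (Pi.single i 1) i * fderiv ℝ w x (Pi.single j 1) j := by
    intro i j
    have h := korn_swap (hwc i) (hws i) (hwc j) (hws j) (Pi.single i 1) (Pi.single j 1)
    simp only [hfd] at h
    exact h.symm
  have intSwap : ∀ (F : Fin n → Fin n → (Fin n → ℝ) → ℝ),
      (∀ i j, Integrable (F i j)) →
      ∫ x, ∑ i, ∑ j, F i j x = ∑ i, ∑ j, ∫ x, F i j x := by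
    intro F hF
    rw [integral_finset_sum _ (fun i _ => integrable_finset_sum _ (fun j _ => hF i j))]
    exact Finset.sum_congr rfl fun i _ => integral_finset_sum _ (fun j _ => hF i j)
  have hQ : 0 ≤ ∫ x, ∑ i, ∑ j,
      fderiv ℝ w x (Pi.single j 1) i * fderiv ℝ w x (Pi.single i 1) j := by
    calc (0:ℝ) ≤ ∫ x, (∑ i, fderiv ℝ w x (Pi.single i 1) i) ^ 2 :=
          integral_nonneg fun x => sq_nonneg _
      _ = ∫ x, ∑ i, ∑ j, fderiv ℝ w x (Pi.single i 1) i * fderiv ℝ w x (Pi.single j 1) j := by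
          congr 1; funext x; rw [pow_two, Finset.sum_mul_sum]
      _ = ∑ i : Fin n, ∑ j : Fin n,
            ∫ x, fderiv ℝ w x (Pi.single i 1) i * fderiv ℝ w x (Pi.single j 1) j :=
          intSwap _ (fun i j => iProd (Pi.single i 1) i (Pi.single j 1) j)
      _ = ∑ i : Fin n, ∑ j : Fin n,
            ∫ x, fderiv ℝ w x (Pi.single j 1) i * fderiv ℝ w x (Pi.single i 1) j :=
          Finset.sum_congr rfl fun i _ => Finset.sum_congr rfl fun j _ => (swapped i j).symm
      _ = ∫ x, ∑ i, ∑ j, fderiv ℝ w x (Pi.single j 1) i * fderiv ℝ w x (Pi.single i 1) j :=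
          (intSwap _ (fun i j => iProd (Pi.single j 1) i (Pi.single i 1) j)).symm
  -- assemble
  have hsplit : 2 * (∫ x : Fin n → ℝ, ∑ i, ∑ j,
        ((fderiv ℝ w x (Pi.single j 1) i + fderiv ℝ w x (Pi.single i 1) j) / 2) ^ 2)
      = (∫ x : Fin n → ℝ, ∑ i, ∑ j, (fderiv ℝ w x (Pi.single j 1) i) ^ 2)
        + ∫ x, ∑ i, ∑ j, fderiv ℝ w x (Pi.single j 1) i * fderiv ℝ w x (Pi.single i 1) j := by
    rw [← integral_const_mul]
    simp only [hpt]
    exact integral_add iP iQ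
  linarith
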